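/- For the negative binomial distribution with parameters r ∈ (0,1] and q ∈ (0,1), for every k ∈ ℕ₀ the tail ratio satisfies (1 - P(k))/p(k+1) ≤ 1/q, where p is the pmf and P the CDF. -/

import Mathlib

open MeasureTheory Real Set

/-- Binomial series via the Gamma integral representation. -/
lemma negBinom_hasSum {r x : ℝ} (hr0 : 0 < r) (hx0 : 0 < x) (hx1 : x < 1)
    (hsum : Summable fun k : ℕ =>
      Real.Gamma ((k : ℝ) + r) / (Real.Gamma r * (Nat.factorial k : ℝ)) * x ^ k) :
    HasSum (fun k : ℕ => Real.Gamma ((k : ℝ) + r) / (Real.Gamma r * (Nat.factorial k : ℝ)) * x ^ k)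
      ((1 - x) ^ (-r)) := by
  set f : ℕ → ℝ := fun k =>
    Real.Gamma ((k : ℝ) + r) / (Real.Gamma r * (Nat.factorial k : ℝ)) * x ^ k with hf
  have hΓr : 0 < Real.Gamma r := Real.Gamma_pos_of_pos hr0
  have hx1' : (0:ℝ) < 1 - x := by linarith
  set g : ℕ → ℝ → ℝ := fun k t => x ^ k / (Real.Gamma r * (Nat.factorial k : ℝ)) *
      (Real.exp (-t) * t ^ ((k : ℝ) + r - 1)) with hg
  have hkr : ∀ k : ℕ, (0:ℝ) < (k : ℝ) + r := fun k => by positivity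
  have hgint : ∀ k : ℕ, IntegrableOn (g k) (Ioi 0) := fun k =>
    (Real.GammaIntegral_convergent (hkr k)).const_mul _
  have hgnn : ∀ k : ℕ, ∀ t ∈ Ioi (0:ℝ), 0 ≤ g k t := by
    intro k t ht
    have : (0:ℝ) < t := ht
    positivity
  have fnn : ∀ k, 0 ≤ f k := by
    intro k
    have := Real.Gamma_pos_of_pos (hkr k)
    have : (0:ℝ) < Nat.factorial k := by positivity
    positivity
  -- each term as a Lebesgue integral
  have step2 : ∀ k : ℕ, ENNReal.ofReal (f k) = ∫⁻ t in Ioi 0, ENNReal.ofReal (g k t) := by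
    intro k
    have hint : ∫ t in Ioi 0, g k t = f k := by
      rw [hg]
      simp only []
      rw [MeasureTheory.integral_const_mul, ← Real.Gamma_eq_integral (hkr k)]
      rw [hf]; ring
    rw [← hint]
    exact MeasureTheory.ofReal_integral_eq_lintegral_ofReal (hgint k)
      ((ae_restrict_iff' measurableSet_Ioi).mpr (ae_of_all _ (hgnn k)))
  -- pointwise sum
  have step4 : ∀ t ∈ Ioi (0:ℝ), (∑' k : ℕ, ENNReal.ofReal (g k t))
      = ENNReal.ofReal (t ^ (r - 1) * Real.exp (-((1 - x) * t)) / Real.Gamma r) := by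
    intro t ht
    have ht0 : (0:ℝ) < t := ht
    have hc : (0:ℝ) ≤ Real.exp (-t) * t ^ (r - 1) / Real.Gamma r := by positivity
    have key : ∀ k : ℕ, g k t
        = (Real.exp (-t) * t ^ (r - 1) / Real.Gamma r) * ((x * t) ^ k / (Nat.factorial k : ℝ)) := by
      intro k
      have htk : t ^ ((k : ℝ) + r - 1) = t ^ (k : ℕ) * t ^ (r - 1) := by
        rw [← Real.rpow_natCast t k, ← Real.rpow_add ht0]
        ring_nf
      rw [hg]
      simp only []
      rw [htk, mul_pow]
      field_simp
    simp_rw [key, ENNReal.ofReal_mul hc, ENNReal.tsum_mul_left]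
    rw [← ENNReal.ofReal_tsum_of_nonneg (fun k => by positivity)
        (Real.summable_pow_div_factorial (x * t)),
      show (∑' n : ℕ, (x*t) ^ n / (Nat.factorial n : ℝ)) = Real.exp (x*t) by
        rw [Real.exp_eq_exp_ℝ, NormedSpace.exp_eq_tsum_div],
      ← ENNReal.ofReal_mul hc]
    congr 1
    rw [show -((1 - x) * t) = -t + x * t by ring, Real.exp_add]
    ring
  -- final integral value
  have step5 : (∫⁻ t in Ioi (0:ℝ),
      ENNReal.ofReal (t ^ (r - 1) * Real.exp (-((1 - x) * t)) / Real.Gamma r))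
      = ENNReal.ofReal ((1 - x) ^ (-r)) := by
    have hint : IntegrableOn (fun t : ℝ => t ^ (r - 1) * Real.exp (-((1 - x) * t)) / Real.Gamma r)
        (Ioi 0) := by
      have h1 : IntegrableOn (fun t : ℝ => Real.exp (-((1 - x) * t)) * ((1 - x) * t) ^ (r - 1))
          (Ioi 0) := by
        have := (integrableOn_Ioi_comp_mul_left_iff
          (fun t : ℝ => Real.exp (-t) * t ^ (r - 1)) 0 hx1').mpr
          (by simpa using Real.GammaIntegral_convergent hr0)
        simpa using this
      have h2 : IntegrableOn
          (fun t : ℝ => (1 - x) ^ (1 - r) / Real.Gamma r *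
            (Real.exp (-((1 - x) * t)) * ((1 - x) * t) ^ (r - 1))) (Ioi 0) := h1.const_mul _
      refine h2.congr_fun (fun t ht => ?_) measurableSet_Ioi
      have ht0 : (0:ℝ) < t := ht
      beta_reduce
      rw [Real.mul_rpow hx1'.le ht0.le]
      rw [show (1:ℝ) - r = -(r-1) by ring, Real.rpow_neg hx1'.le]
      field_simp
    rw [← MeasureTheory.ofReal_integral_eq_lintegral_ofReal hint
        ((ae_restrict_iff' measurableSet_Ioi).mpr (ae_of_all _ (fun t ht => by
          have : (0:ℝ) < t := ht; positivity)))]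
    congr 1
    rw [MeasureTheory.integral_div, Real.integral_rpow_mul_exp_neg_mul_Ioi hr0 hx1',
      mul_div_assoc, div_self hΓr.ne', mul_one, one_div, Real.inv_rpow hx1'.le,
      ← Real.rpow_neg hx1'.le]
  -- assemble
  have main : ENNReal.ofReal (∑' k, f k) = ENNReal.ofReal ((1 - x) ^ (-r)) := by
    rw [ENNReal.ofReal_tsum_of_nonneg fnn hsum]
    simp_rw [step2]
    rw [← MeasureTheory.lintegral_tsum (fun k => by fun_prop)]
    rw [← step5]
    exact setLIntegral_congr_fun measurableSet_Ioi step4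
  have := (ENNReal.ofReal_eq_ofReal_iff (tsum_nonneg fnn) (Real.rpow_nonneg hx1'.le _)).mp main
  exact this ▸ hsum.hasSum

/-- Negative binomial tail-ratio bound for `r ∈ (0,1]`: `(1 - P(k))/p(k+1) ≤ 1/q`. -/
theorem stmt_9 (r q : ℝ) (hr0 : 0 < r) (hr1 : r ≤ 1) (hq0 : 0 < q) (hq1 : q < 1)
    (p : ℕ → ℝ) (P : ℕ → ℝ)
    (hp : ∀ k : ℕ, p k = Real.Gamma ((k : ℝ) + r) / (Real.Gamma r * (Nat.factorial k : ℝ))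
      * (1 - q) ^ k * q ^ r)
    (hP : ∀ k : ℕ, P k = ∑ ℓ ∈ Finset.range (k + 1), p ℓ) :
    ∀ k : ℕ, (1 - P k) / p (k + 1) ≤ 1 / q := by
  set x : ℝ := 1 - q with hxdef
  have hx0 : (0:ℝ) < x := by simp [hxdef]; linarith
  have hx1 : x < 1 := by simp [hxdef]; linarith
  set a : ℕ → ℝ := fun k => Real.Gamma ((k : ℝ) + r) / (Real.Gamma r * (Nat.factorial k : ℝ))
    with hadef
  have hΓr : 0 < Real.Gamma r := Real.Gamma_pos_of_pos hr0
  have hkr : ∀ k : ℕ, (0:ℝ) < (k : ℝ) + r := fun k => by positivity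
  have apos : ∀ k, 0 < a k := by
    intro k
    have h1 := Real.Gamma_pos_of_pos (hkr k)
    have h2 : (0:ℝ) < Nat.factorial k := by positivity
    exact div_pos h1 (by positivity)
  have hfac : ∀ k : ℕ, ((Nat.factorial (k+1) : ℝ)) = ((k:ℝ)+1) * (Nat.factorial k : ℝ) := by
    intro k
    push_cast [Nat.factorial_succ]
    ring
  have harec : ∀ k : ℕ, a (k+1) = ((k:ℝ)+r)/((k:ℝ)+1) * a k := by
    intro k
    have hΓ : Real.Gamma (((k+1 : ℕ) : ℝ) + r) = ((k:ℝ)+r) * Real.Gamma ((k:ℝ)+r) := by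
      rw [show (((k+1 : ℕ) : ℝ) + r) = ((k:ℝ)+r) + 1 by push_cast; ring,
        Real.Gamma_add_one (hkr k).ne']
    rw [hadef]
    simp only []
    rw [hΓ, hfac]
    have h2 : (0:ℝ) < Nat.factorial k := by positivity
    field_simp
  have aone : ∀ k, a k ≤ 1 := by
    intro k
    induction k with
    | zero => simp [hadef, Nat.factorial, div_self hΓr.ne']
    | succ n ih =>
      rw [harec n]
      have hc1 : ((n:ℝ)+r)/((n:ℝ)+1) ≤ 1 := by
        rw [div_le_one (by positivity)]; linarith [Nat.cast_nonneg (α := ℝ) n]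
      calc ((n:ℝ)+r)/((n:ℝ)+1) * a n ≤ 1 * a n :=
            mul_le_mul_of_nonneg_right hc1 (apos n).le
        _ ≤ 1 := by rw [one_mul]; exact ih
  have hpx : ∀ k : ℕ, p k = a k * x ^ k * q ^ r := fun k => hp k
  have ppos : ∀ k, 0 < p k := by
    intro k
    rw [hpx]
    have := apos k
    positivity
  have hsumf : Summable (fun k : ℕ => a k * x ^ k) :=
    Summable.of_nonneg_of_le (fun k => by positivity)
      (fun k => by
        calc a k * x ^ k ≤ 1 * x ^ k :=
              mul_le_mul_of_nonneg_right (aone k) (by positivity)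
          _ = x ^ k := one_mul _)
      (summable_geometric_of_lt_one hx0.le hx1)
  have hassum : HasSum (fun k : ℕ => a k * x ^ k) ((1 - x) ^ (-r)) :=
    negBinom_hasSum hr0 hx0 hx1 hsumf
  have h1x : (1:ℝ) - x = q := by rw [hxdef]; ring
  have hpsum : HasSum p 1 := by
    have := hassum.mul_right (q ^ r)
    rw [h1x] at this
    have hval : q ^ (-r) * q ^ r = 1 := by
      rw [← Real.rpow_add hq0]; simp
    rw [hval] at this
    exact this.congr_fun fun k => hpx k
  have hpsummable : Summable p := hpsum.summable
  intro k
  -- tail identity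
  have htail : (∑ i ∈ Finset.range (k+1), p i) + (∑' i : ℕ, p (i + (k+1))) = 1 := by
    rw [Summable.sum_add_tsum_nat_add (k+1) hpsummable, hpsum.tsum_eq]
  have hstep : ∀ m : ℕ, p (m+1) ≤ x * p m := by
    intro m
    have : p (m+1) = ((m:ℝ)+r)/((m:ℝ)+1) * (x * p m) := by
      rw [hpx, hpx, harec m]
      ring
    rw [this]
    have hc1 : ((m:ℝ)+r)/((m:ℝ)+1) ≤ 1 := by
      rw [div_le_one (by positivity)]; linarith [Nat.cast_nonneg (α := ℝ) m]
    have h0 : (0:ℝ) ≤ x * p m := mul_nonneg hx0.le (ppos m).le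
    calc ((m:ℝ)+r)/((m:ℝ)+1) * (x * p m) ≤ 1 * (x * p m) :=
          mul_le_mul_of_nonneg_right hc1 h0
      _ = x * p m := one_mul _
  have hgeo : ∀ i : ℕ, p (i + (k+1)) ≤ p (k+1) * x ^ i := by
    intro i
    induction i with
    | zero => simp
    | succ n ih =>
      have : p (n + 1 + (k+1)) = p ((n + (k+1)) + 1) := by ring_nf
      rw [this]
      calc p ((n + (k+1)) + 1) ≤ x * p (n + (k+1)) := hstep _
        _ ≤ x * (p (k+1) * x ^ n) := mul_le_mul_of_nonneg_left ih hx0.le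
        _ = p (k+1) * x ^ (n+1) := by ring
  have htailbound : (∑' i : ℕ, p (i + (k+1))) ≤ p (k+1) / q := by
    have hsumtail : Summable (fun i : ℕ => p (i + (k+1))) :=
      (summable_nat_add_iff (k+1)).mpr hpsummable
    have hsumgeo : Summable (fun i : ℕ => p (k+1) * x ^ i) :=
      (summable_geometric_of_lt_one hx0.le hx1).mul_left _
    calc (∑' i : ℕ, p (i + (k+1))) ≤ ∑' i : ℕ, p (k+1) * x ^ i :=
          hsumtail.tsum_le_tsum hgeo hsumgeo
      _ = p (k+1) * (1 - x)⁻¹ := by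
          rw [tsum_mul_left, tsum_geometric_of_lt_one hx0.le hx1]
      _ = p (k+1) / q := by rw [h1x]; ring
  have h2 : 1 - P k ≤ p (k+1) / q := by
    rw [hP k]
    linarith [htail]
  have h3 := mul_le_mul_of_nonneg_right h2 hq0.le
  rw [div_mul_cancel₀ _ hq0.ne'] at h3
  rw [div_le_div_iff₀ (ppos (k+1)) hq0]
  linarith
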